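/- arXiv:1111.0163 — 2 statements merged into one kernel-verified Lean document; each statement's English description precedes it below -/
import Mathlib

section
/- Let K be a global field, S a finite set of places containing the archimedean ones. If Γ ⊂ K_S^n is a discrete I_S-submodule and ξ₁,…,ξ_m ∈ Γ are linearly independent over K (via the diagonal embedding K → K_S), then they are linearly independent over K_S. -/
open scoped BigOperators

/-- In a topological additive group, `x` lies in the closure of `{0}` iff it lies in every
neighbourhood of `0`. -/
lemma aux_mem_closure_zero_iff {G : Type*} [AddGroup G] [TopologicalSpace G]
    [IsTopologicalAddGroup G] (x : G) :
    x ∈ closure ({0} : Set G) ↔ ∀ N ∈ nhds (0 : G), x ∈ N := by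
  constructor
  · intro hx N hN
    have hc : ContinuousAt (fun y : G => x - y) x :=
      (continuous_const.sub continuous_id).continuousAt
    have hW : (fun y : G => x - y) ⁻¹' N ∈ nhds x := hc.preimage_mem_nhds (by simpa using hN)
    rcases mem_closure_iff_nhds.mp hx _ hW with ⟨y, hy1, hy2⟩
    rcases hy2 with rfl
    simpa using hy1
  · intro h
    rw [mem_closure_iff_nhds]
    intro t ht
    have hc : ContinuousAt (fun y : G => x - y) 0 :=
      (continuous_const.sub continuous_id).continuousAt
    have hN : (fun y : G => x - y) ⁻¹' t ∈ nhds (0 : G) :=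
      hc.preimage_mem_nhds (by simpa using ht)
    refine ⟨0, ?_, rfl⟩
    simpa using h _ hN

/-- In a topological division ring, if the closure of `{0}` contains a nonzero element, then
it contains everything. -/
lemma aux_closure_zero_all {F : Type*} [DivisionRing F] [TopologicalSpace F]
    [IsTopologicalRing F] {x : F} (hx : x ∈ closure ({0} : Set F)) (hx0 : x ≠ 0) (y : F) :
    y ∈ closure ({0} : Set F) := by
  have hcont : Continuous fun z : F => (y * x⁻¹) * z := continuous_const.mul continuous_id
  have him : (fun z : F => (y * x⁻¹) * z) '' closure ({0} : Set F)
      ⊆ closure ((fun z : F => (y * x⁻¹) * z) '' ({0} : Set F)) :=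
    image_closure_subset_closure_image hcont
  have h1 : (y * x⁻¹) * x ∈ closure ((fun z : F => (y * x⁻¹) * z) '' ({0} : Set F)) :=
    him ⟨x, hx, rfl⟩
  have h2 : ((fun z : F => (y * x⁻¹) * z) '' ({0} : Set F)) = {0} := by simp
  rw [h2] at h1
  rwa [mul_assoc, inv_mul_cancel₀ hx0, mul_one] at h1

/-- An infinite subset of a compact set has a point near which the set has at least two
elements in every neighbourhood. -/
lemma aux_exists_two {X : Type*} [TopologicalSpace X] {Q E : Set X} (hQ : IsCompact Q)
    (hE : E.Infinite) (hEQ : E ⊆ Q) :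
    ∃ z, ∀ W : Set X, IsOpen W → z ∈ W → ∃ p ∈ E, ∃ q ∈ E, p ∈ W ∧ q ∈ W ∧ p ≠ q := by
  by_contra hno
  push_neg at hno
  choose W hWopen hWmem hWsub using hno
  obtain ⟨t, ht⟩ := hQ.elim_finite_subcover W hWopen (fun z _ => Set.mem_iUnion.mpr ⟨z, hWmem z⟩)
  have hfin : E.Finite := by
    have hsub : E ⊆ ⋃ z ∈ t, (E ∩ W z) := by
      intro p hp
      rcases Set.mem_iUnion₂.mp (ht (hEQ hp)) with ⟨z, hz, hzW⟩
      exact Set.mem_iUnion₂.mpr ⟨z, hz, hp, hzW⟩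
    refine Set.Finite.subset (Set.Finite.biUnion t.finite_toSet (fun z _ => ?_)) hsub
    exact Set.Subsingleton.finite (fun p hp q hq => hWsub z p hp.1 q hq.1 hp.2 hq.2)
  exact hE hfin

/-- **Linear independence over `I_S` implies linear independence over `K_S`.**
`K` is a global field, `S` a finite nonempty set of places, `Kv v` the
completion of `K` at `v ∈ S` (a locally compact topological field in which `K`
is dense via `ι v`), `K_S = ∏_{v∈S} Kv v`, and `R ⊆ K` is the ring `I_S` of
`S`-integers: its diagonal image in `K_S` is discrete and cocompact, and it
satisfies strong approximation (nonzero elements of `R` can be made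
simultaneously small at all places of `S` except any one chosen place `w`).
If `Γ ⊆ K_S^n` is a discrete `I_S`-submodule and `ξ 1, …, ξ m ∈ Γ` are
linearly independent over `K` (embedded diagonally in `K_S`), then they are
linearly independent over `K_S`. -/
theorem linearIndependent_KS_of_linearIndependent_K
    {K : Type*} [Field K]
    {S : Type*} [Fintype S] [Nonempty S]
    {Kv : S → Type*} [∀ v, Field (Kv v)] [∀ v, TopologicalSpace (Kv v)]
    [∀ v, IsTopologicalRing (Kv v)] [∀ v, LocallyCompactSpace (Kv v)]
    (ι : ∀ v, K →+* Kv v)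
    (hdense : ∀ v, DenseRange (ι v))
    (R : Subring K)
    (hRdisc : ∃ U ∈ nhds (0 : ∀ v, Kv v), ∀ a ∈ R, (fun v => ι v a) ∈ U → a = 0)
    (hRcocompact : ∃ C : Set (∀ v, Kv v), IsCompact C ∧
      ∀ x : ∀ v, Kv v, ∃ a ∈ R, (x - fun v => ι v a) ∈ C)
    (hSA : ∀ w : S, ∀ U ∈ nhds (0 : ∀ v : {v : S // v ≠ w}, Kv v),
      ∃ a ∈ R, a ≠ 0 ∧ (fun v : {v : S // v ≠ w} => ι v a) ∈ U)
    {n : ℕ} (Γ : AddSubgroup (Fin n → ∀ v, Kv v))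
    (hΓmod : ∀ a ∈ R, ∀ ξ ∈ Γ, (fun i v => ι v a * ξ i v) ∈ Γ)
    (hΓdisc : DiscreteTopology Γ)
    {m : ℕ} (ξ : Fin m → (Fin n → ∀ v, Kv v)) (hξΓ : ∀ i, ξ i ∈ Γ)
    (hindep : ∀ c : Fin m → K,
      (∑ i, (fun j v => ι v (c i) * ξ i j v)) = 0 → ∀ i, c i = 0) :
    ∀ c : Fin m → ∀ v, Kv v, (∑ i, (fun j v => c i v * ξ i j v)) = 0 → ∀ i, c i = 0 := by
  classical
  intro c hrel
  by_contra hcon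
  push_neg at hcon
  obtain ⟨i₀, hci₀⟩ := hcon
  have hex : ∃ w, c i₀ w ≠ 0 := by
    by_contra h
    push_neg at h
    exact hci₀ (funext h)
  obtain ⟨w, hw⟩ := hex
  -- pointwise relation
  have hrel' : ∀ (j : Fin n) (v : S), (∑ i, c i v * ξ i j v) = 0 := by
    intro j v
    have h1 := congrFun (congrFun hrel j) v
    simpa [Finset.sum_apply] using h1
  obtain ⟨C, hC, hCcov⟩ := hRcocompact
  obtain ⟨U, hU, hUdisc⟩ := hRdisc
  -- basic neighborhood inside U
  have hUb : ∃ tU : ∀ v, Set (Kv v), (∀ v, tU v ∈ nhds (0 : Kv v)) ∧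
      ∀ x : ∀ v, Kv v, (∀ v, x v ∈ tU v) → x ∈ U := by
    rw [nhds_pi, Filter.mem_pi'] at hU
    obtain ⟨I, t, htm, hts⟩ := hU
    exact ⟨t, htm, fun x hx => hts (fun v _ => hx v)⟩
  obtain ⟨tU, htU, htUsub⟩ := hUb
  -- compact neighborhoods of 0 at each place
  choose B hBc hBn using fun v => exists_compact_mem_nhds (0 : Kv v)
  -- the normalized relation coefficients, spread over all places
  set D : Fin m → ∀ v, Kv v :=
    fun i => Function.update (0 : ∀ v, Kv v) w ((c i₀ w)⁻¹ * c i w) with hD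
  have hDw : ∀ i, D i w = (c i₀ w)⁻¹ * c i w := by
    intro i; simp [hD]
  have hDv : ∀ i v, v ≠ w → D i v = 0 := by
    intro i v hv; simp [hD, Function.update_of_ne hv]
  have hDi₀ : D i₀ w = 1 := by
    rw [hDw, inv_mul_cancel₀ hw]
  have hDrel : ∀ (j : Fin n) (v : S), (∑ i, D i v * ξ i j v) = 0 := by
    intro j v
    by_cases hv : v = w
    · subst hv
      have he : ∀ i, D i v * ξ i j v = (c i₀ v)⁻¹ * (c i v * ξ i j v) := by
        intro i; rw [hDw, mul_assoc]
      rw [Finset.sum_congr rfl (fun i _ => he i), ← Finset.mul_sum, hrel' j v, mul_zero]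
    · simp [hDv _ _ hv]
  -- discreteness of Γ, extracted
  have hΓd : ∃ U₀ : Set (Fin n → ∀ v, Kv v), IsOpen U₀ ∧ (0 : Fin n → ∀ v, Kv v) ∈ U₀ ∧
      ∀ g ∈ Γ, g ∈ U₀ → g = 0 := by
    have h1 : IsOpen ({0} : Set Γ) := isOpen_discrete _
    rw [isOpen_induced_iff] at h1
    obtain ⟨U₀, hU₀o, hU₀e⟩ := h1
    refine ⟨U₀, hU₀o, ?_, ?_⟩
    · have : (0 : Γ) ∈ (Subtype.val ⁻¹' U₀ : Set Γ) := by rw [hU₀e]; rfl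
      exact this
    · intro g hg hgU
      have : (⟨g, hg⟩ : Γ) ∈ (Subtype.val ⁻¹' U₀ : Set Γ) := hgU
      rw [hU₀e] at this
      exact congrArg Subtype.val this
  obtain ⟨U₀, hU₀o, hU₀0, hU₀⟩ := hΓd
  -- the set of candidate multipliers
  set Aset : Set K := {a : K | a ∈ R ∧ a ≠ 0 ∧ ∀ v, v ≠ w → ι v a ∈ B v} with hAset
  -- MAIN: if Aset is infinite we get a contradiction
  have main : Aset.Infinite → False := by
    intro hA
    choose bf hbfR hbfC using hCcov
    set tf : K → Fin m → K := fun a i => if i = i₀ then a else bf (fun v => ι v a * D i v)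
      with htf
    set Φ : (Fin m → K) → (Fin n → ∀ v, Kv v) :=
      fun r => ∑ i, (fun j v => ι v (r i) * ξ i j v) with hΦ
    have hΦapp : ∀ r (j : Fin n) (v : S), Φ r j v = ∑ i, ι v (r i) * ξ i j v := by
      intro r j v; simp [hΦ, Finset.sum_apply]
    have htfR : ∀ a ∈ Aset, ∀ i, tf a i ∈ R := by
      intro a ha i
      by_cases h : i = i₀
      · simpa [htf, h] using ha.1
      · simpa [htf, h] using hbfR _
    have hmemΓ : ∀ a ∈ Aset, Φ (tf a) ∈ Γ := by
      intro a ha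
      exact AddSubgroup.sum_mem Γ (fun i _ => hΓmod _ (htfR a ha i) _ (hξΓ i))
    have hΦsub : ∀ r r' : Fin m → K,
        Φ r - Φ r' = ∑ i, (fun j v => ι v (r i - r' i) * ξ i j v) := by
      intro r r'
      rw [hΦ]
      simp only
      rw [← Finset.sum_sub_distrib]
      refine Finset.sum_congr rfl (fun i _ => ?_)
      funext j v
      simp [map_sub, sub_mul]
    have hinj : Set.InjOn (fun a => Φ (tf a)) Aset := by
      intro a ha a' ha' h
      replace h : Φ (tf a) = Φ (tf a') := h
      have h0 : (∑ i, (fun j v => ι v (tf a i - tf a' i) * ξ i j v)) = 0 := by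
        rw [← hΦsub, h, sub_self]
      have h1 : tf a i₀ - tf a' i₀ = 0 := hindep _ h0 i₀
      have h2 : tf a i₀ = tf a' i₀ := sub_eq_zero.mp h1
      simpa [htf] using h2
    set E : ∀ v, Set (Kv v) :=
      fun v => (B v ∪ ((fun y => -y) '' ((fun x : ∀ u, Kv u => x v) '' C))) ∪ {0} with hE
    have hEc : ∀ v, IsCompact (E v) := fun v =>
      ((hBc v).union ((hC.image (continuous_apply v)).image continuous_neg)).union
        isCompact_singleton
    set Q : Fin n → ∀ v, Set (Kv v) := fun j v =>
      (fun ε : Fin m → Kv v => ∑ i, ε i * ξ i j v) '' (Set.pi Set.univ fun _ => E v) with hQdef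
    have hQc : ∀ (j : Fin n) (v : S), IsCompact (Q j v) := by
      intro j v
      refine (isCompact_univ_pi (fun _ => hEc v)).image ?_
      exact continuous_finset_sum _ (fun i _ => (continuous_apply i).mul continuous_const)
    set QQ : Set (Fin n → ∀ v, Kv v) :=
      Set.pi Set.univ (fun j => Set.pi Set.univ (fun v => Q j v)) with hQQ
    have hQQc : IsCompact QQ := isCompact_univ_pi (fun j => isCompact_univ_pi (fun v => hQc j v))
    have hmemQ : ∀ a ∈ Aset, Φ (tf a) ∈ QQ := by
      intro a ha
      refine Set.mem_univ_pi.mpr (fun j => Set.mem_univ_pi.mpr (fun v => ?_))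
      rw [hΦapp]
      refine ⟨fun i => ι v (tf a i) - ι v a * D i v, Set.mem_univ_pi.mpr (fun i => ?_), ?_⟩
      · have h0 : ∀ h : i = i₀, tf a i = a := by intro h; simp [htf, h]
        by_cases hi : i = i₀
        · by_cases hv : v = w
          · have : ι v (tf a i) - ι v a * D i v = 0 := by
              rw [h0 hi, hi, hv, hDi₀, mul_one, sub_self]
            rw [this]
            exact Or.inr rfl
          · have : ι v (tf a i) - ι v a * D i v = ι v a := by
              rw [h0 hi, hi, hDv i₀ v hv, mul_zero, sub_zero]
            rw [this]
            exact Or.inl (Or.inl (ha.2.2 v hv))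
        · have hsp := hbfC (fun u => ι u a * D i u)
          have hcomp : ι v a * D i v - ι v (bf (fun u => ι u a * D i u)) ∈
              (fun x : ∀ u, Kv u => x v) '' C := ⟨_, hsp, rfl⟩
          have : ι v (tf a i) - ι v a * D i v
              = -(ι v a * D i v - ι v (bf (fun u => ι u a * D i u))) := by
            simp only [htf, if_neg hi, neg_sub]
          rw [this]
          exact Or.inl (Or.inr ⟨_, hcomp, rfl⟩)
      · show (∑ i : Fin m, (ι v (tf a i) - ι v a * D i v) * ξ i j v)
            = ∑ i : Fin m, ι v (tf a i) * ξ i j v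
        have hterm : ∀ i, (ι v (tf a i) - ι v a * D i v) * ξ i j v
            = ι v (tf a i) * ξ i j v - ι v a * (D i v * ξ i j v) := by
          intro i; rw [sub_mul, mul_assoc]
        rw [Finset.sum_congr rfl (fun i _ => hterm i), Finset.sum_sub_distrib,
          ← Finset.mul_sum, hDrel j v, mul_zero, sub_zero]
    have hIm : ((fun a => Φ (tf a)) '' Aset).Infinite := hA.image hinj
    obtain ⟨z, hz⟩ := aux_exists_two hQQc hIm (by rintro _ ⟨a, ha, rfl⟩; exact hmemQ a ha)
    have hcont : Continuous (fun p : (Fin n → ∀ v, Kv v) × (Fin n → ∀ v, Kv v) => p.1 - p.2) :=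
      continuous_fst.sub continuous_snd
    have hopen : IsOpen
        ((fun p : (Fin n → ∀ v, Kv v) × (Fin n → ∀ v, Kv v) => p.1 - p.2) ⁻¹' U₀) :=
      hU₀o.preimage hcont
    have hzz : (z, z) ∈
        ((fun p : (Fin n → ∀ v, Kv v) × (Fin n → ∀ v, Kv v) => p.1 - p.2) ⁻¹' U₀) := by
      simp [hU₀0]
    obtain ⟨V₁, V₂, hV₁, hV₂, hz1, hz2, hVsub⟩ := isOpen_prod_iff.mp hopen z z hzz
    obtain ⟨p, hp, q, hq, hpW, hqW, hpq⟩ := hz (V₁ ∩ V₂) (hV₁.inter hV₂) ⟨hz1, hz2⟩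
    have h1 : p - q ∈ U₀ := hVsub (show (p, q) ∈ V₁ ×ˢ V₂ from ⟨hpW.1, hqW.2⟩)
    have hpΓ : p ∈ Γ := by rcases hp with ⟨a, ha, rfl⟩; exact hmemΓ a ha
    have hqΓ : q ∈ Γ := by rcases hq with ⟨a, ha, rfl⟩; exact hmemΓ a ha
    have h2 : p - q = 0 := hU₀ _ (AddSubgroup.sub_mem _ hpΓ hqΓ) h1
    exact hpq (sub_eq_zero.mp h2)
  -- Now we establish that `Aset` is infinite (or reach a contradiction directly).
  by_cases hS : ∃ u : S, u ≠ w
  · -- there is another place besides `w`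
    apply main
    by_contra hfin
    rw [Set.not_infinite] at hfin
    -- otherwise there is a nonzero element of R whose image is in the closure of 0
    -- at all places other than w
    have ha₀ : ∃ a₀ : K, a₀ ∈ R ∧ a₀ ≠ 0 ∧
        ∀ v, v ≠ w → ι v a₀ ∈ closure ({0} : Set (Kv v)) := by
      by_contra h'
      push_neg at h'
      have hch : ∀ a : Aset, ∃ va : S, va ≠ w ∧ ∃ N ∈ nhds (0 : Kv va), ι va a.1 ∉ N := by
        rintro ⟨a, haR, ha0, haB⟩
        obtain ⟨v, hvw, hvcl⟩ := h' a haR ha0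
        rw [aux_mem_closure_zero_iff] at hvcl
        push_neg at hvcl
        obtain ⟨N, hN, hNa⟩ := hvcl
        exact ⟨v, hvw, N, hN, hNa⟩
      choose va hva N hN hNa using hch
      have : Finite Aset := hfin.to_subtype
      have hVmem : (Set.pi Set.univ (fun v : {v : S // v ≠ w} => B v.1) ∩
          ⋂ a : Aset, (fun f : ∀ v : {v : S // v ≠ w}, Kv v => f ⟨va a, hva a⟩) ⁻¹' (N a))
          ∈ nhds (0 : ∀ v : {v : S // v ≠ w}, Kv v) := by
        refine Filter.inter_mem ?_ ?_
        · exact set_pi_mem_nhds Set.finite_univ (fun v _ => hBn v.1)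
        · rw [Filter.iInter_mem]
          intro a
          exact (continuous_apply (⟨va a, hva a⟩ : {v : S // v ≠ w})).continuousAt.preimage_mem_nhds
            (by simpa using hN a)
      obtain ⟨a', ha'R, ha'0, ha'mem⟩ := hSA w _ hVmem
      have ha'A : a' ∈ Aset := by
        refine ⟨ha'R, ha'0, fun v hv => ?_⟩
        exact ha'mem.1 ⟨v, hv⟩ trivial
      have := ha'mem.2
      rw [Set.mem_iInter] at this
      exact hNa ⟨a', ha'A⟩ (this ⟨a', ha'A⟩)
    obtain ⟨a₀, ha₀R, ha₀0, ha₀cl⟩ := ha₀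
    obtain ⟨u, hu⟩ := hS
    have hι0 : ι u a₀ ≠ 0 := fun h => ha₀0 ((ι u).injective (by rw [h, map_zero]))
    have hclu : ∀ y : Kv u, y ∈ closure ({0} : Set (Kv u)) :=
      fun y => aux_closure_zero_all (ha₀cl u hu) hι0 y
    -- now hSA at u contradicts discreteness of R
    have hVmem : (Set.pi Set.univ (fun v : {v : S // v ≠ u} => tU v.1))
        ∈ nhds (0 : ∀ v : {v : S // v ≠ u}, Kv v) :=
      set_pi_mem_nhds Set.finite_univ (fun v _ => htU v.1)
    obtain ⟨a', ha'R, ha'0, ha'mem⟩ := hSA u _ hVmem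
    have : (fun v => ι v a') ∈ U := by
      refine htUsub _ (fun v => ?_)
      by_cases hvu : v = u
      · subst hvu
        exact (aux_mem_closure_zero_iff _).mp (hclu (ι v a')) _ (htU v)
      · exact ha'mem ⟨v, hvu⟩ trivial
    exact ha'0 (hUdisc a' ha'R this)
  · -- S = {w}
    push_neg at hS
    by_cases hRfin : (R : Set K).Finite
    · -- R is finite: then Kv w is compact and Hausdorff, hence discrete, hence ι w surjective
      have hcl : ∀ x : Kv w, x ∈ closure ({0} : Set (Kv w)) → x = 0 := by
        intro x hx
        by_contra hx0
        have hall : ∀ y : Kv w, y ∈ closure ({0} : Set (Kv w)) :=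
          fun y => aux_closure_zero_all hx hx0 y
        have h1U : (fun v => ι v (1 : K)) ∈ U := by
          refine htUsub _ (fun v => ?_)
          have hv := hS v
          subst hv
          exact (aux_mem_closure_zero_iff _).mp (hall _) _ (htU v)
        exact one_ne_zero (hUdisc 1 R.one_mem h1U)
      have h1cl : (1 : Kv w) ∉ closure ({0} : Set (Kv w)) := fun h => one_ne_zero (hcl 1 h)
      have hO : ∃ O : Set (Kv w), IsOpen O ∧ (0 : Kv w) ∈ O ∧ (1 : Kv w) ∉ O := by
        rw [aux_mem_closure_zero_iff] at h1cl
        push_neg at h1cl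
        obtain ⟨N, hN, h1N⟩ := h1cl
        obtain ⟨O, hOsub, hOopen, hO0⟩ := mem_nhds_iff.mp hN
        exact ⟨O, hOopen, hO0, fun h => h1N (hOsub h)⟩
      obtain ⟨O, hOopen, hO0, h1O⟩ := hO
      have hTcomp : IsCompact (Set.univ : Set (∀ v, Kv v)) := by
        have hT : IsCompact (⋃ a ∈ (R : Set K),
            (fun x : ∀ v, Kv v => (fun v => ι v a) + x) '' C) :=
          Set.Finite.isCompact_biUnion hRfin
            (fun a _ => hC.image (continuous_const.add continuous_id))
        refine IsCompact.of_isClosed_subset hT isClosed_univ (fun x _ => ?_)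
        obtain ⟨a, haR, haC⟩ := hCcov x
        exact Set.mem_biUnion haR ⟨x - fun v => ι v a, haC, by simp⟩
      have hKw : IsCompact (Set.univ : Set (Kv w)) := by
        have him := hTcomp.image (continuous_apply w)
        have hsurj : (fun x : ∀ v, Kv v => x w) '' Set.univ = Set.univ := by
          apply Set.eq_univ_of_forall
          intro y
          exact ⟨Function.update (0 : ∀ v, Kv v) w y, trivial, Function.update_self ..⟩
        rwa [hsurj] at him
      have hpre : ({0} : Set (Kv w)) ×ˢ (Set.univ : Set (Kv w)) ⊆
          (fun p : Kv w × Kv w => p.1 * p.2) ⁻¹' O := by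
        rintro ⟨p1, p2⟩ ⟨hp1, -⟩
        rcases hp1 with rfl
        simpa using hO0
      obtain ⟨u1, v1, hu1, hv1, hsu, hsv, huv⟩ := generalized_tube_lemma isCompact_singleton hKw
        (hOopen.preimage continuous_mul) hpre
      have hu1sub : u1 ⊆ {0} := by
        intro z hz
        by_contra hz0
        have hmem : (z, z⁻¹) ∈ u1 ×ˢ v1 := ⟨hz, hsv trivial⟩
        have := huv hmem
        rw [Set.mem_preimage] at this
        rw [show (z, z⁻¹).1 * (z, z⁻¹).2 = (1 : Kv w) from mul_inv_cancel₀ hz0] at this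
        exact h1O this
      have hzero_open : IsOpen ({0} : Set (Kv w)) := by
        have : u1 = {0} := subset_antisymm hu1sub (fun y hy => by rcases hy; exact hsu rfl)
        rw [← this]
        exact hu1
      have hallopen : ∀ s : Set (Kv w), IsOpen s := by
        intro s
        have hs : s = ⋃ y ∈ s, {y} := by simp
        rw [hs]
        refine isOpen_biUnion (fun y hy => ?_)
        have : ({y} : Set (Kv w)) = (fun z => z - y) ⁻¹' {0} := by
          ext z; simp [sub_eq_zero]
        rw [this]
        exact hzero_open.preimage (continuous_id.sub continuous_const)
      have hrange : Set.range (ι w) = Set.univ := by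
        have hclosed : IsClosed (Set.range (ι w)) := ⟨hallopen _⟩
        rw [← hclosed.closure_eq]
        exact (hdense w).closure_eq
      have hsur : ∀ y : Kv w, ∃ lam : K, ι w lam = y := by
        intro y
        have : y ∈ Set.range (ι w) := by rw [hrange]; trivial
        exact this
      choose lam hlam using fun i => hsur (c i w)
      have hre : (∑ i, (fun j v => ι v (lam i) * ξ i j v)) = 0 := by
        funext j v
        have hv := hS v
        subst hv
        rw [Finset.sum_apply, Finset.sum_apply]
        simp only [hlam]
        rw [hrel' j v]
        rfl
      exact hw (by rw [← hlam i₀, hindep _ hre i₀, map_zero])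
    · -- R is infinite
      apply main
      have hinf : ((R : Set K) \ {0}).Infinite :=
        Set.Infinite.diff hRfin (Set.finite_singleton 0)
      refine hinf.mono (fun a ha => ?_)
      exact ⟨ha.1, by simpa using ha.2, fun v hv => absurd (hS v) hv⟩
end

section
/- There exists a constant A > 1 depending only on K and S such that: for any ξ ∈ K_S^n with cont(ξ) ≠ 0 there exists a unit a ∈ I_S^* with A^{-|S|} cont(ξ) ≤ ‖aξ‖^{|S|} ≤ A^{|S|} cont(ξ). -/
open MeasureTheory
open scoped BigOperators ENNReal NNReal

section SAdic

variable {Sr Sc Sf : Type} [Fintype Sr] [Fintype Sc] [Fintype Sf]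

/-- The completion of a global field at a place in `S = Sr ⊕ Sc ⊕ Sf`:
`ℝ` at real places, `ℂ` at complex places, and a non-archimedean local field
`Kf v` at the finite places. -/
@[reducible] def PlaceField (Kf : Sf → Type) : Sr ⊕ Sc ⊕ Sf → Type
  | .inl _ => ℝ
  | .inr (.inl _) => ℂ
  | .inr (.inr v) => Kf v

variable (Kf : Sf → Type) [∀ v, NontriviallyNormedField (Kf v)]

noncomputable instance : ∀ v : Sr ⊕ Sc ⊕ Sf, Field (PlaceField (Sr := Sr) (Sc := Sc) Kf v)
  | .inl _ => inferInstanceAs (Field ℝ)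
  | .inr (.inl _) => inferInstanceAs (Field ℂ)
  | .inr (.inr v) => inferInstanceAs (Field (Kf v))

noncomputable instance : ∀ v : Sr ⊕ Sc ⊕ Sf, TopologicalSpace (PlaceField (Sr := Sr) (Sc := Sc) Kf v)
  | .inl _ => inferInstanceAs (TopologicalSpace ℝ)
  | .inr (.inl _) => inferInstanceAs (TopologicalSpace ℂ)
  | .inr (.inr v) => inferInstanceAs (TopologicalSpace (Kf v))

variable [∀ v, MeasurableSpace (Kf v)]

instance : ∀ v : Sr ⊕ Sc ⊕ Sf, MeasurableSpace (PlaceField (Sr := Sr) (Sc := Sc) Kf v)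
  | .inl _ => inferInstanceAs (MeasurableSpace ℝ)
  | .inr (.inl _) => inferInstanceAs (MeasurableSpace ℂ)
  | .inr (.inr v) => inferInstanceAs (MeasurableSpace (Kf v))

/-- The normalized norm on `K_v^n`: the Euclidean norm at real places, the
*square* of the Euclidean norm at complex places, and the sup norm at
non-archimedean places. -/
noncomputable def placeNorm (n : ℕ) :
    ∀ v : Sr ⊕ Sc ⊕ Sf, (Fin n → PlaceField (Sr := Sr) (Sc := Sc) Kf v) → ℝ
  | .inl _ => fun x => Real.sqrt (∑ i, x i ^ 2)
  | .inr (.inl _) => fun x => ∑ i, ‖x i‖ ^ 2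
  | .inr (.inr _) => fun x => ⨆ i, ‖x i‖

/-- The norm `‖ξ‖ = max_{v∈S} ‖ξ_v‖_v` on `K_S^n`. -/
noncomputable def SNorm {n : ℕ}
    (ξ : Fin n → ∀ v : Sr ⊕ Sc ⊕ Sf, PlaceField (Sr := Sr) (Sc := Sc) Kf v) : ℝ :=
  ⨆ v, placeNorm Kf n v (fun i => ξ i v)

/-- The content `cont(ξ) = ∏_{v∈S} ‖ξ_v‖_v` on `K_S^n`. -/
noncomputable def SCont {n : ℕ}
    (ξ : Fin n → ∀ v : Sr ⊕ Sc ⊕ Sf, PlaceField (Sr := Sr) (Sc := Sc) Kf v) : ℝ :=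
  ∏ v, placeNorm Kf n v (fun i => ξ i v)

/-- The open ball `B_r(K_S^n)` of radius `r` centred at `0`. -/
noncomputable def SBall (n : ℕ) (r : ℝ) :
    Set (Fin n → ∀ v : Sr ⊕ Sc ⊕ Sf, PlaceField (Sr := Sr) (Sc := Sc) Kf v) :=
  {ξ | SNorm Kf ξ < r}

variable (μf : ∀ v, Measure (Kf v))

/-- The normalized Haar measure on `K_v`: Lebesgue measure at real and complex
places, the given Haar measure `μf v` (normalized by `μf v (I_v) = 1`) at the
finite places. -/
noncomputable def placeMeasure :
    ∀ v : Sr ⊕ Sc ⊕ Sf, Measure (PlaceField (Sr := Sr) (Sc := Sc) Kf v)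
  | .inl _ => volume
  | .inr (.inl _) => volume
  | .inr (.inr v) => μf v

def placeMeasureSigmaFinite [∀ v, SigmaFinite (μf v)] :
    ∀ v : Sr ⊕ Sc ⊕ Sf, SigmaFinite (placeMeasure (Sr := Sr) (Sc := Sc) Kf μf v)
  | .inl _ => inferInstanceAs (SigmaFinite (volume : Measure ℝ))
  | .inr (.inl _) => inferInstanceAs (SigmaFinite (volume : Measure ℂ))
  | .inr (.inr v) => inferInstanceAs (SigmaFinite (μf v))

/-- The normalized Haar measure `vol` on `K_S^n`, the product of the
normalized measures at the places of `S`. -/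
noncomputable def SVol [∀ v, SigmaFinite (μf v)] (n : ℕ) :
    Measure (Fin n → ∀ v : Sr ⊕ Sc ⊕ Sf, PlaceField (Sr := Sr) (Sc := Sc) Kf v) :=
  haveI := placeMeasureSigmaFinite Kf μf
  Measure.pi fun _ => Measure.pi (placeMeasure Kf μf)


variable {K : Type} [Field K]

/-- `K`-linear independence (via the diagonal embedding of `K` in `K_S`) of a
family of vectors in `K_S^n`. -/
def KIndep (ι : ∀ v : Sr ⊕ Sc ⊕ Sf, K →+* PlaceField (Sr := Sr) (Sc := Sc) Kf v)
    {n m : ℕ} (f : Fin m → (Fin n → ∀ v, PlaceField (Sr := Sr) (Sc := Sc) Kf v)) : Prop :=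
  ∀ c : Fin m → K, (∑ i, (fun j v => ι v (c i) * f i j v)) = 0 → ∀ i, c i = 0

/-- `K_S`-linear independence of a family of vectors in `K_S^n`. -/
def KSIndep {n m : ℕ}
    (f : Fin m → (Fin n → ∀ v, PlaceField (Sr := Sr) (Sc := Sc) Kf v)) : Prop :=
  ∀ c : Fin m → (∀ v, PlaceField (Sr := Sr) (Sc := Sc) Kf v),
    (∑ i, (fun j v => c i v * f i j v)) = 0 → ∀ i, c i = 0

/-- The `m`-th successive minimum of `Γ ⊆ K_S^n`:
`ι_m = inf {r > 0 : dim_K span_K (B_r(K_S^n) ∩ Γ) ≥ m}`, expressed via the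
existence of `m` vectors of `Γ ∩ B_r` that are linearly independent over `K`. -/
noncomputable def sMinimum
    (ι : ∀ v : Sr ⊕ Sc ⊕ Sf, K →+* PlaceField (Sr := Sr) (Sc := Sc) Kf v)
    {n : ℕ} (Γ : Set (Fin n → ∀ v, PlaceField (Sr := Sr) (Sc := Sc) Kf v))
    (m : ℕ) : ℝ :=
  sInf {r : ℝ | 0 < r ∧ ∃ f : Fin m → (Fin n → ∀ v, PlaceField (Sr := Sr) (Sc := Sc) Kf v),
    (∀ i, f i ∈ Γ ∧ SNorm Kf (f i) < r) ∧ KIndep Kf ι f}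

/-- The normalized absolute value on `K_v`: the usual absolute value at real
places, the *square* of the usual absolute value at complex places, and the
norm at non-archimedean places. -/
noncomputable def placeAbs :
    ∀ v : Sr ⊕ Sc ⊕ Sf, PlaceField (Sr := Sr) (Sc := Sc) Kf v → ℝ
  | .inl _ => fun x => |x|
  | .inr (.inl _) => fun x => ‖x‖ ^ 2
  | .inr (.inr _) => fun x => ‖x‖

/-- The covering radius of `Γ ⊆ K_S^n`:
`inf {r > 0 : B_r(K_S^n) + Γ = K_S^n}`. -/
noncomputable def covRadius {n : ℕ}
    (Γ : Set (Fin n → ∀ v, PlaceField (Sr := Sr) (Sc := Sc) Kf v)) : ℝ :=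
  sInf {r : ℝ | 0 < r ∧
    ∀ x : Fin n → ∀ v, PlaceField (Sr := Sr) (Sc := Sc) Kf v,
      ∃ γ ∈ Γ, SNorm Kf (x - γ) < r}

end SAdic

section AuxLemmas

variable {Sr Sc Sf : Type} [Fintype Sr] [Fintype Sc] [Fintype Sf]
variable (Kf : Sf → Type) [∀ v, NontriviallyNormedField (Kf v)]

lemma placeNorm_nonneg (n : ℕ) (v : Sr ⊕ Sc ⊕ Sf)
    (x : Fin n → PlaceField (Sr := Sr) (Sc := Sc) Kf v) :
    0 ≤ placeNorm Kf n v x := by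
  match v with
  | .inl _ => exact Real.sqrt_nonneg _
  | .inr (.inl _) => exact Finset.sum_nonneg fun i _ => sq_nonneg _
  | .inr (.inr w) => exact Real.iSup_nonneg fun i => norm_nonneg _

lemma placeNorm_smul (n : ℕ) (v : Sr ⊕ Sc ⊕ Sf)
    (a : PlaceField (Sr := Sr) (Sc := Sc) Kf v)
    (x : Fin n → PlaceField (Sr := Sr) (Sc := Sc) Kf v) :
    placeNorm Kf n v (fun i => a * x i)
      = placeAbs Kf v a * placeNorm Kf n v x := by
  match v with
  | .inl _ =>
      show Real.sqrt (∑ i, (a * x i) ^ 2) = |a| * Real.sqrt (∑ i, x i ^ 2)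
      simp_rw [mul_pow, ← Finset.mul_sum]
      rw [Real.sqrt_mul (sq_nonneg a), Real.sqrt_sq_eq_abs]
  | .inr (.inl _) =>
      show (∑ i, ‖a * x i‖ ^ 2)
        = ‖a‖ ^ 2 * ∑ i, ‖x i‖ ^ 2
      simp_rw [norm_mul, mul_pow, ← Finset.mul_sum]
  | .inr (.inr w) =>
      show (⨆ i, ‖a * x i‖) = ‖a‖ * ⨆ i, ‖x i‖
      simp_rw [norm_mul]
      exact (Real.mul_iSup_of_nonneg (norm_nonneg a) _).symm

end AuxLemmas

/-- **Balancing contents and norms by `S`-units (Lemma 8 of the paper).**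
By the Dirichlet `S`-unit theorem the units of `I_S` map onto a cocompact
lattice of the hypersurface `{(r_v) ∈ ℝ_{>0}^S : ∏ r_v = 1}` (hypothesis
`hDir`).  Hence there is `A > 1`, depending only on `K` and `S`, such that for
every `ξ ∈ K_S^n` with `cont ξ ≠ 0` there is a unit `a ∈ I_S^*` with
`A^{-|S|} cont ξ ≤ ‖a ξ‖^{|S|} ≤ A^{|S|} cont ξ`. -/
theorem exists_unit_balancing_content
    {Sr Sc Sf : Type} [Fintype Sr] [Fintype Sc] [Fintype Sf]
    [Nonempty (Sr ⊕ Sc ⊕ Sf)]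
    (Kf : Sf → Type) [∀ v, NontriviallyNormedField (Kf v)]
    [∀ v, IsUltrametricDist (Kf v)] [∀ v, CompleteSpace (Kf v)]
    [∀ v, MeasurableSpace (Kf v)] [∀ v, BorelSpace (Kf v)]
    (μf : ∀ v, Measure (Kf v)) [∀ v, SigmaFinite (μf v)]
    [∀ v, (μf v).IsAddHaarMeasure]
    (hnormμ : ∀ v, μf v (Metric.closedBall 0 1) = 1)
    (q : Sf → ℕ) (hq : ∀ v, 1 < q v)
    (hϖ : ∀ v, ∃ ϖ : Kf v, ‖ϖ‖ = ((q v : ℝ))⁻¹)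
    (hval : ∀ v, ∀ x : Kf v, x ≠ 0 → ∃ k : ℤ, ‖x‖ = (q v : ℝ) ^ k)
    {K : Type} [Field K]
    (ι : ∀ v : Sr ⊕ Sc ⊕ Sf, K →+* PlaceField (Sr := Sr) (Sc := Sc) Kf v)
    (R : Subring K)
    (hRdisc : ∃ ε > (0:ℝ), ∀ a ∈ R, a ≠ 0 →
      ε ≤ ⨆ v, placeAbs (Sr := Sr) (Sc := Sc) Kf v (ι v a))
    (hRcc : ∃ B : ℝ, ∀ x : ∀ v, PlaceField (Sr := Sr) (Sc := Sc) Kf v,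
      ∃ a ∈ R, (⨆ v, placeAbs (Sr := Sr) (Sc := Sc) Kf v (x v - ι v a)) ≤ B)
    (hDir : ∃ A₀ : ℝ, 1 < A₀ ∧ ∀ r : (Sr ⊕ Sc ⊕ Sf) → ℝ,
      (∀ v, 0 < r v) → (∏ v, r v) = 1 →
      ∃ a : K, a ∈ R ∧ a ≠ 0 ∧ a⁻¹ ∈ R ∧
        ∀ v, A₀⁻¹ ≤ placeAbs (Sr := Sr) (Sc := Sc) Kf v (ι v a) * r v ∧
          placeAbs (Sr := Sr) (Sc := Sc) Kf v (ι v a) * r v ≤ A₀)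
    (n : ℕ) :
    ∃ A : ℝ, 1 < A ∧
      ∀ ξ : Fin n → ∀ v, PlaceField (Sr := Sr) (Sc := Sc) Kf v,
        SCont (Sr := Sr) (Sc := Sc) Kf ξ ≠ 0 →
        ∃ a : K, a ∈ R ∧ a ≠ 0 ∧ a⁻¹ ∈ R ∧
          A⁻¹ ^ Fintype.card (Sr ⊕ Sc ⊕ Sf) * SCont (Sr := Sr) (Sc := Sc) Kf ξ ≤
            SNorm (Sr := Sr) (Sc := Sc) Kf (fun i v => ι v a * ξ i v) ^
              Fintype.card (Sr ⊕ Sc ⊕ Sf) ∧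
          SNorm (Sr := Sr) (Sc := Sc) Kf (fun i v => ι v a * ξ i v) ^
              Fintype.card (Sr ⊕ Sc ⊕ Sf) ≤
            A ^ Fintype.card (Sr ⊕ Sc ⊕ Sf) * SCont (Sr := Sr) (Sc := Sc) Kf ξ := by
  obtain ⟨A₀, hA₀, hDir⟩ := hDir
  refine ⟨A₀, hA₀, fun ξ hc => ?_⟩
  set s := Fintype.card (Sr ⊕ Sc ⊕ Sf) with hs_def
  have hs : 0 < s := Fintype.card_pos
  have hsR : (0:ℝ) < (s:ℝ) := by exact_mod_cast hs
  set N : (Sr ⊕ Sc ⊕ Sf) → ℝ := fun v => placeNorm Kf n v (fun i => ξ i v) with hN_def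
  have hcont_eq : SCont (Sr := Sr) (Sc := Sc) Kf ξ = ∏ v, N v := rfl
  have hNpos : ∀ v, 0 < N v := by
    intro v
    rcases lt_or_eq_of_le (placeNorm_nonneg Kf n v (fun i => ξ i v)) with h | h
    · exact h
    · exact absurd (hcont_eq.trans (Finset.prod_eq_zero (Finset.mem_univ v) h.symm)) hc
  have hcont : 0 < SCont (Sr := Sr) (Sc := Sc) Kf ξ := by
    rw [hcont_eq]; exact Finset.prod_pos fun v _ => hNpos v
  set G : ℝ := (SCont (Sr := Sr) (Sc := Sc) Kf ξ) ^ ((s:ℝ)⁻¹) with hG_def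
  have hGpos : 0 < G := Real.rpow_pos_of_pos hcont _
  have hGs : G ^ s = SCont (Sr := Sr) (Sc := Sc) Kf ξ := by
    rw [hG_def, ← Real.rpow_natCast (_ ^ _) s, ← Real.rpow_mul hcont.le,
      inv_mul_cancel₀ hsR.ne', Real.rpow_one]
  obtain ⟨a, haR, ha0, haiR, hbd⟩ := hDir (fun v => N v / G)
    (fun v => div_pos (hNpos v) hGpos)
    (by
      rw [Finset.prod_div_distrib, Finset.prod_const, Finset.card_univ, ← hs_def, hGs]
      exact div_self hcont.ne')
  refine ⟨a, haR, ha0, haiR, ?_⟩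
  set av : (Sr ⊕ Sc ⊕ Sf) → ℝ := fun v => placeAbs (Sr := Sr) (Sc := Sc) Kf v (ι v a)
  have hbd' : ∀ v, G * A₀⁻¹ ≤ av v * N v ∧ av v * N v ≤ G * A₀ := by
    intro v
    obtain ⟨h1, h2⟩ := hbd v
    constructor
    · have := mul_le_mul_of_nonneg_right h1 hGpos.le
      calc G * A₀⁻¹ = A₀⁻¹ * G := mul_comm _ _
        _ ≤ av v * (N v / G) * G := this
        _ = av v * N v := by field_simp
    · have := mul_le_mul_of_nonneg_right h2 hGpos.le
      calc av v * N v = av v * (N v / G) * G := by field_simp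
        _ ≤ A₀ * G := this
        _ = G * A₀ := mul_comm _ _
  have hSN : SNorm (Sr := Sr) (Sc := Sc) Kf (fun i v => ι v a * ξ i v)
      = ⨆ v, av v * N v := by
    unfold SNorm
    exact iSup_congr fun v => placeNorm_smul Kf n v (ι v a) (fun i => ξ i v)
  set M := SNorm (Sr := Sr) (Sc := Sc) Kf (fun i v => ι v a * ξ i v) with hM_def
  have hMle : M ≤ G * A₀ := by
    rw [hSN]
    exact ciSup_le fun v => (hbd' v).2
  have hMge : G * A₀⁻¹ ≤ M := by
    rw [hSN]
    obtain ⟨v⟩ := ‹Nonempty (Sr ⊕ Sc ⊕ Sf)›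
    exact le_trans (hbd' v).1 (le_ciSup (f := fun v => av v * N v) (Set.Finite.bddAbove (Set.finite_range _)) v)
  have hMnonneg : 0 ≤ M :=
    le_trans (mul_nonneg hGpos.le (inv_nonneg.mpr (le_of_lt (lt_trans one_pos hA₀)))) hMge
  constructor
  · calc A₀⁻¹ ^ s * SCont (Sr := Sr) (Sc := Sc) Kf ξ = A₀⁻¹ ^ s * G ^ s := by rw [hGs]
      _ = (G * A₀⁻¹) ^ s := by rw [mul_pow, mul_comm]
      _ ≤ M ^ s := pow_le_pow_left₀ (mul_nonneg hGpos.le (inv_nonneg.mpr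
          (le_of_lt (lt_trans one_pos hA₀)))) hMge s
  · calc M ^ s ≤ (G * A₀) ^ s := pow_le_pow_left₀ hMnonneg hMle s
      _ = A₀ ^ s * G ^ s := by rw [mul_pow, mul_comm]
      _ = A₀ ^ s * SCont (Sr := Sr) (Sc := Sc) Kf ξ := by rw [hGs]
end
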